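/- For every subset R of rows of the constraint matrix above, decomposed as R = A ∪ B ∪ C with A ⊆ {a1,a2,a3}, B ⊆ {b_1,…,b_n}, C ⊆ {c_1,…,c_n}, there is a ±1-coloring l of R such that for every column, the weighted column sum ∑_{r∈R} l(r)·a_{r,j} lies in {−1,0,1}. In particular: if A = ∅ take l(b_i)=1, l(c_i)=−1; if A = {a1,a2,a3} take l(a1)=l(a2)=1, l(a3)=−1, l(b_i)=l(c_i)=−1; and analogous colorings exist in all other cases for A. -/
import Mathlib

/-- The constraint matrix of the MIP formulation of recoverable selection. -/
def constraintMatrix (n : ℕ) :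
    Matrix ((Fin 3) ⊕ (Fin n ⊕ Fin n)) (Fin n ⊕ (Fin n ⊕ Fin n)) ℤ :=
  fun r c =>
    match r, c with
    | Sum.inl 0, Sum.inl _ => 1
    | Sum.inl 0, Sum.inr (Sum.inl _) => 0
    | Sum.inl 0, Sum.inr (Sum.inr _) => 1
    | Sum.inl 1, Sum.inl _ => 0
    | Sum.inl 1, Sum.inr (Sum.inl _) => 1
    | Sum.inl 1, Sum.inr (Sum.inr _) => 1
    | Sum.inl 2, Sum.inl _ => 0
    | Sum.inl 2, Sum.inr (Sum.inl _) => 0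
    | Sum.inl 2, Sum.inr (Sum.inr _) => 1
    | Sum.inr (Sum.inl i), Sum.inl j => if i = j then 1 else 0
    | Sum.inr (Sum.inl _), Sum.inr (Sum.inl _) => 0
    | Sum.inr (Sum.inl i), Sum.inr (Sum.inr j) => if i = j then 1 else 0
    | Sum.inr (Sum.inr _), Sum.inl _ => 0
    | Sum.inr (Sum.inr i), Sum.inr (Sum.inl j) => if i = j then 1 else 0
    | Sum.inr (Sum.inr i), Sum.inr (Sum.inr j) => if i = j then 1 else 0

lemma ghind_sum (n : ℕ) (R : Finset ((Fin 3) ⊕ (Fin n ⊕ Fin n))) (f : Fin n → ℤ)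
    (g : Fin n → (Fin 3) ⊕ (Fin n ⊕ Fin n)) (j : Fin n) :
    (∑ x : Fin n, if g x ∈ R then if x = j then f x else 0 else 0) =
      (if g j ∈ R then f j else 0) := by
  rw [Finset.sum_eq_single j] <;> intros <;> simp_all

lemma gh_sum_col_x (n : ℕ) (R : Finset ((Fin 3) ⊕ (Fin n ⊕ Fin n)))
    (l : (Fin 3) ⊕ (Fin n ⊕ Fin n) → ℤ) (j : Fin n) :
    ∑ r ∈ R, l r * constraintMatrix n r (Sum.inl j) =
      (if Sum.inl 0 ∈ R then l (Sum.inl 0) else 0)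
      + (if Sum.inr (Sum.inl j) ∈ R then l (Sum.inr (Sum.inl j)) else 0) := by
  rw [← Finset.univ_inter R, ← Finset.sum_ite_mem]
  rw [Fintype.sum_sum_type, Fintype.sum_sum_type, Fin.sum_univ_three]
  simp only [constraintMatrix, mul_ite, mul_one, mul_zero, ite_self]
  rw [ghind_sum]
  simp

lemma gh_sum_col_y (n : ℕ) (R : Finset ((Fin 3) ⊕ (Fin n ⊕ Fin n)))
    (l : (Fin 3) ⊕ (Fin n ⊕ Fin n) → ℤ) (j : Fin n) :
    ∑ r ∈ R, l r * constraintMatrix n r (Sum.inr (Sum.inl j)) =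
      (if Sum.inl 1 ∈ R then l (Sum.inl 1) else 0)
      + (if Sum.inr (Sum.inr j) ∈ R then l (Sum.inr (Sum.inr j)) else 0) := by
  rw [← Finset.univ_inter R, ← Finset.sum_ite_mem]
  rw [Fintype.sum_sum_type, Fintype.sum_sum_type, Fin.sum_univ_three]
  simp only [constraintMatrix, mul_ite, mul_one, mul_zero, ite_self]
  rw [ghind_sum]
  simp

lemma gh_sum_col_z (n : ℕ) (R : Finset ((Fin 3) ⊕ (Fin n ⊕ Fin n)))
    (l : (Fin 3) ⊕ (Fin n ⊕ Fin n) → ℤ) (j : Fin n) :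
    ∑ r ∈ R, l r * constraintMatrix n r (Sum.inr (Sum.inr j)) =
      (if Sum.inl 0 ∈ R then l (Sum.inl 0) else 0)
      + (if Sum.inl 1 ∈ R then l (Sum.inl 1) else 0)
      + (if Sum.inl 2 ∈ R then l (Sum.inl 2) else 0)
      + (if Sum.inr (Sum.inl j) ∈ R then l (Sum.inr (Sum.inl j)) else 0)
      + (if Sum.inr (Sum.inr j) ∈ R then l (Sum.inr (Sum.inr j)) else 0) := by
  rw [← Finset.univ_inter R, ← Finset.sum_ite_mem]
  rw [Fintype.sum_sum_type, Fintype.sum_sum_type, Fin.sum_univ_three]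
  simp only [constraintMatrix, mul_ite, mul_one, mul_zero, ite_self]
  rw [ghind_sum, ghind_sum]
  simp only [Finset.univ_inter]
  ring

/-- Ghouila-Houri coloring for the constraint matrix: every subset of rows admits
a ±1 coloring under which every weighted column sum lies in {-1,0,1}.  In the case
where no `a`-row is present one can take `l(b_i)=1`, `l(c_i)=-1`, and in the case
where all three `a`-rows are present one can take `l(a1)=l(a2)=1`, `l(a3)=-1`,
`l(b_i)=l(c_i)=-1`. -/
theorem constraintMatrix_ghouilaHouri (n : ℕ) :
    (∀ R : Finset ((Fin 3) ⊕ (Fin n ⊕ Fin n)),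
      ∃ l : (Fin 3) ⊕ (Fin n ⊕ Fin n) → ℤ,
        (∀ r ∈ R, l r = 1 ∨ l r = -1) ∧
        ∀ j : Fin n ⊕ (Fin n ⊕ Fin n),
          (∑ r ∈ R, l r * constraintMatrix n r j) ∈ ({-1, 0, 1} : Set ℤ)) ∧
    (∀ R : Finset ((Fin 3) ⊕ (Fin n ⊕ Fin n)),
      (∀ i : Fin 3, Sum.inl i ∉ R) →
      ∀ j : Fin n ⊕ (Fin n ⊕ Fin n),
        (∑ r ∈ R, (Sum.elim (fun _ => (1 : ℤ))
            (Sum.elim (fun _ => 1) (fun _ => -1)) r) * constraintMatrix n r j)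
          ∈ ({-1, 0, 1} : Set ℤ)) ∧
    (∀ R : Finset ((Fin 3) ⊕ (Fin n ⊕ Fin n)),
      (∀ i : Fin 3, Sum.inl i ∈ R) →
      ∀ j : Fin n ⊕ (Fin n ⊕ Fin n),
        (∑ r ∈ R, (Sum.elim (fun i : Fin 3 => if i = 2 then (-1 : ℤ) else 1)
            (fun _ => -1) r) * constraintMatrix n r j)
          ∈ ({-1, 0, 1} : Set ℤ)) := by
  refine ⟨?_, ?_, ?_⟩
  · intro R
    classical
    refine ⟨Sum.elim
      (fun i : Fin 3 => ![(1 : ℤ),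
        (if (Sum.inl 0 ∈ R) ∧ Sum.inl 2 ∉ R then -1 else 1), -1] i)
      (Sum.elim
        (fun _ => if Sum.inl 0 ∈ R then -1
          else if (Sum.inl 1 ∈ R) ∧ Sum.inl 2 ∉ R then -1 else 1)
        (fun _ => if Sum.inl 1 ∈ R then
            (if (Sum.inl 0 ∈ R) ∧ Sum.inl 2 ∉ R then 1 else -1)
          else (if Sum.inl 2 ∈ R then 1 else -1))), ?_, ?_⟩
    · rintro (i | i | i) _
      · fin_cases i <;> simp only [Sum.elim_inl, Matrix.cons_val_zero, Matrix.cons_val_one,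
          Matrix.head_cons, Matrix.cons_val_two, Matrix.tail_cons] <;> split_ifs <;> simp
      · simp only [Sum.elim_inr, Sum.elim_inl]; split_ifs <;> simp
      · simp only [Sum.elim_inr]; split_ifs <;> simp
    · rintro (j | j | j)
      · rw [gh_sum_col_x]
        simp only [Sum.elim_inl, Sum.elim_inr, Matrix.cons_val_zero,
          Set.mem_insert_iff, Set.mem_singleton_iff]
        by_cases h1 : Sum.inl (0 : Fin 3) ∈ R <;>
          by_cases h2 : Sum.inl (1 : Fin 3) ∈ R <;>
          by_cases h3 : Sum.inl (2 : Fin 3) ∈ R <;>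
          by_cases hb : Sum.inr (Sum.inl j) ∈ R <;>
          simp [h1, h2, h3, hb] <;> split_ifs <;> norm_num
      · rw [gh_sum_col_y]
        simp only [Sum.elim_inl, Sum.elim_inr, Matrix.cons_val_one, Matrix.head_cons,
          Set.mem_insert_iff, Set.mem_singleton_iff]
        by_cases h1 : Sum.inl (0 : Fin 3) ∈ R <;>
          by_cases h2 : Sum.inl (1 : Fin 3) ∈ R <;>
          by_cases h3 : Sum.inl (2 : Fin 3) ∈ R <;>
          by_cases hc : Sum.inr (Sum.inr j) ∈ R <;>
          simp [h1, h2, h3, hc] <;> split_ifs <;> norm_num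
      · rw [gh_sum_col_z]
        simp only [Sum.elim_inl, Sum.elim_inr, Matrix.cons_val_zero, Matrix.cons_val_one,
          Matrix.head_cons, Set.mem_insert_iff, Set.mem_singleton_iff]
        by_cases h1 : Sum.inl (0 : Fin 3) ∈ R <;>
          by_cases h2 : Sum.inl (1 : Fin 3) ∈ R <;>
          by_cases h3 : Sum.inl (2 : Fin 3) ∈ R <;>
          by_cases hb : Sum.inr (Sum.inl j) ∈ R <;>
          by_cases hc : Sum.inr (Sum.inr j) ∈ R <;>
          simp [h1, h2, h3, hb, hc] <;> split_ifs <;> norm_num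
  · intro R hR j
    rcases j with j | j | j
    · rw [gh_sum_col_x]
      simp only [Sum.elim_inl, Sum.elim_inr, if_neg (hR 0), Set.mem_insert_iff,
        Set.mem_singleton_iff]
      split_ifs <;> norm_num
    · rw [gh_sum_col_y]
      simp only [Sum.elim_inl, Sum.elim_inr, if_neg (hR 1), Set.mem_insert_iff,
        Set.mem_singleton_iff]
      split_ifs <;> norm_num
    · rw [gh_sum_col_z]
      simp only [Sum.elim_inl, Sum.elim_inr, if_neg (hR 0), if_neg (hR 1), if_neg (hR 2),
        Set.mem_insert_iff, Set.mem_singleton_iff]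
      split_ifs <;> norm_num
  · intro R hR j
    rcases j with j | j | j
    · rw [gh_sum_col_x]
      simp only [Sum.elim_inl, Sum.elim_inr, if_pos (hR 0), Set.mem_insert_iff,
        Set.mem_singleton_iff, if_neg (show ¬(0 : Fin 3) = 2 by decide)]
      split_ifs <;> norm_num
    · rw [gh_sum_col_y]
      simp only [Sum.elim_inl, Sum.elim_inr, if_pos (hR 1), Set.mem_insert_iff,
        Set.mem_singleton_iff, if_neg (show ¬(1 : Fin 3) = 2 by decide)]
      split_ifs <;> norm_num
    · rw [gh_sum_col_z]
      simp only [Sum.elim_inl, Sum.elim_inr, if_pos (hR 0), if_pos (hR 1), if_pos (hR 2),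
        Set.mem_insert_iff, Set.mem_singleton_iff,
        if_neg (show ¬(0 : Fin 3) = 2 by decide), if_neg (show ¬(1 : Fin 3) = 2 by decide),
        if_pos (show (2 : Fin 3) = 2 from rfl)]
      split_ifs <;> norm_num
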